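/- (Theorem 4.2: conditional convergence of the one-dimensional explicit scheme, 0 < γ < 1.) Let γ ∈ (0,1), α ∈ (1,2], integers N ≥ 2 and N_t ≥ 1, reals τ > 0 and Δx > 0, nonnegative reals c_{i,k} (1 ≤ i ≤ N-1, 0 ≤ k ≤ N_t - 1) with c_{i,k} ≤ C_max, and assume the stability condition 4·(-κ_α)·C_max·Γ(2-γ)·(1-2^{1-α})·τ^γ ≤ Γ(4-α)·(1-2^{-γ})·(Δx)^α. Set σ_{i,k} = -Γ(2-γ)·τ^γ·κ_α·c_{i,k}/(Γ(4-α)·(Δx)^α) ≥ 0. Let R^k_i (1 ≤ i ≤ N-1, 1 ≤ k ≤ N_t) be reals with R_max = max_{i,k} |R^k_i|. Suppose real numbers ε^k_i satisfy ε^0_i = 0 for all i, ε^k_0 = ε^k_N = 0 for 1 ≤ k ≤ N_t, ε^1_i = R^1_i for 1 ≤ i ≤ N-1, and for all 1 ≤ i ≤ N-1 and 1 ≤ k ≤ N_t - 1: ε^{k+1}_i = (1 - l_1 + σ_{i,k}·g^{α,N}_{i,i})·ε^k_i + Σ_{s=1}^{k-1}(l_s - l_{s+1})·ε^{k-s}_i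 + σ_{i,k}·Σ_{m=0, m≠i}^{N} g^{α,N}_{i,m}·ε^k_m + R^{k+1}_i. Then for every 1 ≤ k ≤ N_t: max_{0≤i≤N} |ε^k_i| ≤ R_max / l_{k-1} ≤ (k^γ/(1-γ))·R_max. In particular, if T > 0, N_t·τ ≤ T and |R^k_i| ≤ C·τ^γ·(τ^{2-γ} + (Δx)^2) for all i, k, then max_{0≤i≤N} |ε^k_i| ≤ (C·T^γ/(1-γ))·(τ^{2-γ} + (Δx)^2) for all k. -/

import Mathlib

/-- The coefficients `a^ν_{j,m}` of the second-order discretization of the left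
Riemann–Liouville fractional derivative. All powers are real powers. -/
noncomputable def aCoef (ν : ℝ) (j m : ℕ) : ℝ :=
  if m = j then 1
  else if m = 0 then ((j : ℝ) - 1) ^ (3 - ν) - (j : ℝ) ^ (2 - ν) * ((j : ℝ) - 3 + ν)
  else ((j : ℝ) - (m : ℝ) + 1) ^ (3 - ν) - 2 * ((j : ℝ) - (m : ℝ)) ^ (3 - ν)
    + ((j : ℝ) - (m : ℝ) - 1) ^ (3 - ν)

/-- The coefficients `b^ν_{j,m}` of the second-order discretization of the right
Riemann–Liouville fractional derivative on a grid with `N` subintervals. -/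
noncomputable def bCoef (ν : ℝ) (N j m : ℕ) : ℝ :=
  if m = j then 1
  else if m = N then (3 - ν - (N : ℝ) + (j : ℝ)) * ((N : ℝ) - (j : ℝ)) ^ (2 - ν)
    + ((N : ℝ) - (j : ℝ) - 1) ^ (3 - ν)
  else ((m : ℝ) - (j : ℝ) + 1) ^ (3 - ν) - 2 * ((m : ℝ) - (j : ℝ)) ^ (3 - ν)
    + ((m : ℝ) - (j : ℝ) - 1) ^ (3 - ν)

/-- The coefficients `p^ν_{i,m}` (left-derivative part), for `1 ≤ i ≤ N-1`. -/
noncomputable def pCoef (ν : ℝ) (i m : ℕ) : ℝ :=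
  if m < i then aCoef ν (i - 1) m - 2 * aCoef ν i m + aCoef ν (i + 1) m
  else if m = i then -2 * aCoef ν i i + aCoef ν (i + 1) i
  else if m = i + 1 then aCoef ν (i + 1) (i + 1)
  else 0

/-- The coefficients `q^ν_{i,m}` (right-derivative part), for `1 ≤ i ≤ N-1`. -/
noncomputable def qCoef (ν : ℝ) (N i m : ℕ) : ℝ :=
  if m + 1 < i then 0
  else if m + 1 = i then bCoef ν N (i - 1) (i - 1)
  else if m = i then -2 * bCoef ν N i i + bCoef ν N (i - 1) i
  else bCoef ν N (i - 1) m - 2 * bCoef ν N i m + bCoef ν N (i + 1) m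

/-- The Riesz-derivative difference coefficients `g^{ν,N}_{i,m} = p^ν_{i,m} + q^ν_{i,m}`. -/
noncomputable def gCoef (ν : ℝ) (N i m : ℕ) : ℝ := pCoef ν i m + qCoef ν N i m

/-- The L1 coefficients `l_s = (s+1)^(1-γ) - s^(1-γ)` of the Caputo discretization. -/
noncomputable def lCoef (γ : ℝ) (s : ℕ) : ℝ := ((s : ℝ) + 1) ^ (1 - γ) - (s : ℝ) ^ (1 - γ)

/-- The Riesz constant `κ_ν = 1 / (2 cos(νπ/2))`. -/
noncomputable def kappa (ν : ℝ) : ℝ := 1 / (2 * Real.cos (ν * Real.pi / 2))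

/-- The maximum of `|v i|` over `0 ≤ i ≤ N`. -/
noncomputable def maxAbs (N : ℕ) (v : ℕ → ℝ) : ℝ :=
  (Finset.range (N + 1)).sup' Finset.nonempty_range_add_one fun i => |v i|

/-- The maximum of `|v i j|` over `0 ≤ i ≤ Nx`, `0 ≤ j ≤ Ny`. -/
noncomputable def maxAbs2 (Nx Ny : ℕ) (v : ℕ → ℕ → ℝ) : ℝ :=
  ((Finset.range (Nx + 1)) ×ˢ (Finset.range (Ny + 1))).sup'
    (Finset.nonempty_range_add_one.product Finset.nonempty_range_add_one) fun p => |v p.1 p.2|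


section ExplAux
open intervalIntegral MeasureTheory Finset
variable {γ α : ℝ} {N : ℕ}


/-- AM-GM: `y ^ θ ≤ θ y + (1 - θ)`. -/
lemma rpow_le_lin {y θ : ℝ} (hy : 0 ≤ y) (h0 : 0 ≤ θ) (h1 : θ ≤ 1) :
    y ^ θ ≤ θ * y + (1 - θ) := by
  have h := Real.geom_mean_le_arith_mean2_weighted (w₁ := θ) (w₂ := 1 - θ) (p₁ := y)
    (p₂ := 1) h0 (by linarith) hy zero_le_one (by ring)
  rw [Real.one_rpow, mul_one, mul_one] at h
  exact h

/-- midpoint concavity of `x ^ q` for `0 ≤ q ≤ 1` on nonnegative reals. -/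
lemma midpoint_concave {q a b : ℝ} (hq0 : 0 ≤ q) (hq1 : q ≤ 1) (ha : 0 ≤ a) (hb : 0 ≤ b)
    (hab : 0 < a + b) : a ^ q + b ^ q ≤ 2 * ((a + b) / 2) ^ q := by
  set M : ℝ := (a + b) / 2 with hM
  have hMpos : 0 < M := by positivity
  have hda : a = M * (2 * a / (a + b)) := by field_simp [hM]; ring
  have hdb : b = M * (2 * b / (a + b)) := by field_simp [hM]; ring
  have h1 : a ^ q ≤ M ^ q * (q * (2 * a / (a + b)) + (1 - q)) := by
    calc a ^ q = M ^ q * (2 * a / (a + b)) ^ q := by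
          rw [← Real.mul_rpow hMpos.le (by positivity), ← hda]
      _ ≤ M ^ q * (q * (2 * a / (a + b)) + (1 - q)) := by
          exact mul_le_mul_of_nonneg_left (rpow_le_lin (by positivity) hq0 hq1)
            (Real.rpow_nonneg hMpos.le q)
  have h2 : b ^ q ≤ M ^ q * (q * (2 * b / (a + b)) + (1 - q)) := by
    calc b ^ q = M ^ q * (2 * b / (a + b)) ^ q := by
          rw [← Real.mul_rpow hMpos.le (by positivity), ← hdb]
      _ ≤ M ^ q * (q * (2 * b / (a + b)) + (1 - q)) := by
          exact mul_le_mul_of_nonneg_left (rpow_le_lin (by positivity) hq0 hq1)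
            (Real.rpow_nonneg hMpos.le q)
  have hsum : q * (2 * a / (a + b)) + (1 - q) + (q * (2 * b / (a + b)) + (1 - q)) = 2 := by
    field_simp
    ring
  calc a ^ q + b ^ q ≤ M ^ q * (q * (2 * a / (a + b)) + (1 - q))
        + M ^ q * (q * (2 * b / (a + b)) + (1 - q)) := add_le_add h1 h2
    _ = 2 * M ^ q := by rw [← mul_add, hsum]; ring

/-- midpoint convexity of `x ^ r` for `r ≤ 0` on positive reals. -/
lemma midpoint_convex_neg {r a b : ℝ} (hr : r ≤ 0) (ha : 0 < a) (hb : 0 < b) :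
    2 * ((a + b) / 2) ^ r ≤ a ^ r + b ^ r := by
  have hsq : Real.sqrt (a * b) ≤ (a + b) / 2 := by
    rw [show (a + b) / 2 = Real.sqrt (((a + b) / 2) ^ 2) by
      rw [Real.sqrt_sq (by positivity)]]
    apply Real.sqrt_le_sqrt; nlinarith [sq_nonneg (a - b)]
  have h1 : ((a + b) / 2) ^ r ≤ (Real.sqrt (a * b)) ^ r :=
    Real.rpow_le_rpow_of_nonpos (Real.sqrt_pos.2 (by positivity)) hsq hr
  have h2 : (Real.sqrt (a * b)) ^ r = Real.sqrt (a ^ r * b ^ r) := by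
    rw [← Real.mul_rpow ha.le hb.le, Real.sqrt_eq_rpow, Real.sqrt_eq_rpow,
      ← Real.rpow_mul (by positivity), ← Real.rpow_mul (by positivity),
      show 1 / 2 * r = r * (1 / 2) by ring]
  have h3 : 2 * Real.sqrt (a ^ r * b ^ r) ≤ a ^ r + b ^ r := by
    have h4 := Real.sqrt_le_sqrt (show a ^ r * b ^ r ≤ ((a ^ r + b ^ r) / 2) ^ 2 by
      nlinarith [sq_nonneg (a ^ r - b ^ r)])
    rw [Real.sqrt_sq (by positivity)] at h4
    linarith
  calc 2 * ((a + b) / 2) ^ r ≤ 2 * Real.sqrt (a ^ r * b ^ r) := by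
        rw [← h2]; linarith [h1]
    _ ≤ a ^ r + b ^ r := h3

/-- `0 ≤ 7 + 3 ^ p - 4 * 2 ^ p` for `1 ≤ p ≤ 2`. -/
lemma seven_ineq {p : ℝ} (hp1 : 1 ≤ p) (hp2 : p ≤ 2) :
    0 ≤ 7 + (3:ℝ) ^ p - 4 * (2:ℝ) ^ p := by
  set θ : ℝ := Real.log 2 / Real.log 3 with hθ
  have hl3 : 0 < Real.log 3 := Real.log_pos (by norm_num)
  have hl2 : 0 < Real.log 2 := Real.log_pos (by norm_num)
  have hθ0 : 0 ≤ θ := by positivity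
  have hθ1 : θ ≤ 1 := by
    rw [hθ, div_le_one hl3]
    exact Real.log_le_log (by norm_num) (by norm_num)
  have h3θ : (3:ℝ) ^ θ = 2 := by
    rw [Real.rpow_def_of_pos (by norm_num),
      show Real.log 3 * θ = Real.log 2 by rw [hθ]; field_simp]
    exact Real.exp_log (by norm_num)
  have hθgt : 9 / 16 < θ := by
    rw [hθ, lt_div_iff₀ hl3]
    have h := Real.log_lt_log (show (0:ℝ) < 3 ^ (9:ℕ) by positivity)
      (show ((3:ℝ)) ^ (9:ℕ) < 2 ^ (16:ℕ) by norm_num)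
    rw [Real.log_pow, Real.log_pow] at h
    push_cast at h
    linarith
  have h32 : (3:ℝ) ^ (2:ℝ) = 9 := by
    rw [show (2:ℝ) = ((2:ℕ):ℝ) by norm_num, Real.rpow_natCast]; norm_num
  have h3p9 : (3:ℝ) ^ p ≤ 9 := by
    calc (3:ℝ) ^ p ≤ (3:ℝ) ^ (2:ℝ) := Real.rpow_le_rpow_of_exponent_le (by norm_num) hp2
      _ = 9 := h32
  have h2p : ((3:ℝ) ^ p) ^ θ = (2:ℝ) ^ p := by
    rw [← Real.rpow_mul (by norm_num : (0:ℝ) ≤ 3), show p * θ = θ * p by ring,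
      Real.rpow_mul (by norm_num : (0:ℝ) ≤ 3), h3θ]
  have h9θ : (9:ℝ) ^ θ = 4 := by
    rw [← h32, ← Real.rpow_mul (by norm_num : (0:ℝ) ≤ 3), show (2:ℝ) * θ = θ * 2 by ring,
      Real.rpow_mul (by norm_num : (0:ℝ) ≤ 3), h3θ]
    rw [show (2:ℝ) = ((2:ℕ):ℝ) by norm_num, Real.rpow_natCast]; norm_num
  have key : ((3:ℝ) ^ p / 9) ^ θ ≤ θ * ((3:ℝ) ^ p / 9) + (1 - θ) :=
    rpow_le_lin (by positivity) hθ0 hθ1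
  have hLHS : ((3:ℝ) ^ p / 9) ^ θ = (2:ℝ) ^ p / 4 := by
    rw [Real.div_rpow (by positivity) (by norm_num), h9θ, h2p]
  rw [hLHS] at key
  have h3ppos : (0:ℝ) < (3:ℝ) ^ p := by positivity
  nlinarith [mul_nonneg (show (0:ℝ) ≤ 16 * θ - 9 by linarith)
    (show (0:ℝ) ≤ 9 - (3:ℝ) ^ p by linarith)]


/-- `3 * 2 ^ q ≤ 3 + 3 ^ q` for `0 ≤ q ≤ 1`. -/
lemma three_two_ineq {q : ℝ} (hq0 : 0 ≤ q) (hq1 : q ≤ 1) :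
    3 * (2:ℝ) ^ q ≤ 3 + (3:ℝ) ^ q := by
  set θ : ℝ := Real.log 2 / Real.log 3 with hθ
  have hl3 : 0 < Real.log 3 := Real.log_pos (by norm_num)
  have hl2 : 0 < Real.log 2 := Real.log_pos (by norm_num)
  have hθ0 : 0 ≤ θ := by positivity
  have hθ1 : θ ≤ 1 := by
    rw [hθ, div_le_one hl3]; exact Real.log_le_log (by norm_num) (by norm_num)
  have h3θ : (3:ℝ) ^ θ = 2 := by
    rw [Real.rpow_def_of_pos (by norm_num),
      show Real.log 3 * θ = Real.log 2 by rw [hθ]; field_simp]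
    exact Real.exp_log (by norm_num)
  have hθgt : 1 / 2 < θ := by
    rw [hθ, lt_div_iff₀ hl3]
    have h := Real.log_lt_log (show (0:ℝ) < 3 by norm_num) (show (3:ℝ) < 4 by norm_num)
    rw [show (4:ℝ) = 2 ^ (2:ℕ) by norm_num, Real.log_pow] at h
    push_cast at h
    linarith
  have h3q : (3:ℝ) ^ q ≤ 3 := by
    calc (3:ℝ) ^ q ≤ (3:ℝ) ^ (1:ℝ) := Real.rpow_le_rpow_of_exponent_le (by norm_num) hq1
      _ = 3 := Real.rpow_one 3
  have h2p : ((3:ℝ) ^ q) ^ θ = (2:ℝ) ^ q := by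
    rw [← Real.rpow_mul (by norm_num : (0:ℝ) ≤ 3), show q * θ = θ * q by ring,
      Real.rpow_mul (by norm_num : (0:ℝ) ≤ 3), h3θ]
  have key : ((3:ℝ) ^ q / 3) ^ θ ≤ θ * ((3:ℝ) ^ q / 3) + (1 - θ) :=
    rpow_le_lin (by positivity) hθ0 hθ1
  have hLHS : ((3:ℝ) ^ q / 3) ^ θ = (2:ℝ) ^ q / 2 := by
    rw [Real.div_rpow (by positivity) (by norm_num), h2p,
      show (3:ℝ) ^ θ = 2 from h3θ]
  rw [hLHS] at key
  nlinarith [mul_nonneg (show (0:ℝ) ≤ 2 * θ - 1 by linarith)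
    (show (0:ℝ) ≤ 3 - (3:ℝ) ^ q by linarith)]

/-- interval integrability of shifted rpow. -/
lemma ii_shift {r : ℝ} (hr : -1 < r) (c x y : ℝ) :
    IntervalIntegrable (fun t => (t + c) ^ r) volume x y := by
  have h := (intervalIntegrable_rpow' hr (a := x + c) (b := y + c)).comp_add_right c
  simpa using h

/-- first difference of rpow as an integral. -/
lemma diff_eq_integral {q : ℝ} (hq : 0 < q) (t c : ℝ) :
    (t + c + 1) ^ q - (t + c) ^ q = q * ∫ s in t..(t+1), (s + c) ^ (q - 1) := by
  have h1 := integral_rpow (a := t + c) (b := t + c + 1)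
    (Or.inl (show (-1:ℝ) < q - 1 by linarith))
  rw [show q - 1 + 1 = q by ring] at h1
  rw [integral_comp_add_right (fun s => s ^ (q - 1)) c,
    show t + 1 + c = t + c + 1 by ring, h1]
  field_simp

/-- second difference of `x ^ q` is nonpositive for `0 ≤ q ≤ 1`, `t ≥ 0`. -/
lemma second_diff_nonpos {q t : ℝ} (hq0 : 0 ≤ q) (hq1 : q ≤ 1) (ht : 0 ≤ t) :
    (t+2) ^ q - 2 * (t+1) ^ q + t ^ q ≤ 0 := by
  have h := midpoint_concave hq0 hq1 ht (by linarith : (0:ℝ) ≤ t + 2)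
    (by linarith : (0:ℝ) < t + (t + 2))
  rw [show (t + (t+2))/2 = t + 1 by ring] at h
  linarith

/-- third difference of `x ^ q` is nonnegative for `0 < q ≤ 1`, `t ≥ 0`. -/
lemma third_diff_nonneg {q t : ℝ} (hq0 : 0 < q) (hq1 : q ≤ 1) (ht : 0 ≤ t) :
    0 ≤ (t+3) ^ q - 3 * (t+2) ^ q + 3 * (t+1) ^ q - t ^ q := by
  rcases eq_or_lt_of_le ht with h0 | htpos
  · -- t = 0
    rw [← h0, Real.zero_rpow hq0.ne', zero_add, zero_add, zero_add, Real.one_rpow]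
    have := three_two_ineq hq0.le hq1
    linarith
  · set r : ℝ := q - 1 with hr
    have hrneg : r ≤ 0 := by rw [hr]; linarith
    have e0 := diff_eq_integral hq0 t 0
    have e1 := diff_eq_integral hq0 t 1
    have e2 := diff_eq_integral hq0 t 2
    simp only [add_zero] at e0 e1 e2
    rw [show t + 1 + 1 = t + 2 by ring] at e1
    rw [show t + 2 + 1 = t + 3 by ring] at e2
    have hmono : (∫ s in t..(t+1), 2 * (s + 1) ^ r) ≤
        ∫ s in t..(t+1), ((s + 0) ^ r + (s + 2) ^ r) := by
      apply integral_mono_on (by linarith)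
      · exact ((ii_shift (by linarith) 1 t (t+1)).const_mul 2)
      · exact (ii_shift (by linarith) 0 t (t+1)).add (ii_shift (by linarith) 2 t (t+1))
      · intro s hs
        obtain ⟨hs1, hs2⟩ := hs
        have hspos : 0 < s := lt_of_lt_of_le htpos hs1
        have h := midpoint_convex_neg hrneg hspos (by linarith : (0:ℝ) < s + 2)
        rw [show (s + (s+2))/2 = s + 1 by ring] at h
        simpa using h
    rw [intervalIntegral.integral_const_mul, integral_add (ii_shift (by linarith) 0 t (t+1))
      (ii_shift (by linarith) 2 t (t+1))] at hmono
    simp only [add_zero] at hmono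
    have key : 0 ≤ q * ((∫ s in t..(t+1), (s:ℝ) ^ r) - 2 * (∫ s in t..(t+1), ((s:ℝ) + 1) ^ r)
        + ∫ s in t..(t+1), ((s:ℝ) + 2) ^ r) := by
      apply mul_nonneg hq0.le
      linarith
    nlinarith [key, e0, e1, e2]

/-- third difference of `x ^ p` is nonpositive for `1 ≤ p ≤ 2`, `x ≥ 0`. -/
lemma third_diff_p_nonpos {p x : ℝ} (hp1 : 1 ≤ p) (hp2 : p ≤ 2) (hx : 0 ≤ x) :
    (x+3) ^ p - 3 * (x+2) ^ p + 3 * (x+1) ^ p - x ^ p ≤ 0 := by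
  rcases eq_or_lt_of_le hp1 with h1 | hp1'
  · rw [← h1]
    simp only [Real.rpow_one]
    ring_nf
    -- goal should be closed by linarith after ring_nf
    linarith
  · have hq0 : (0:ℝ) < p - 1 := by linarith
    have e0 := diff_eq_integral (show (0:ℝ) < p by linarith) x 0
    have e1 := diff_eq_integral (show (0:ℝ) < p by linarith) x 1
    have e2 := diff_eq_integral (show (0:ℝ) < p by linarith) x 2
    simp only [add_zero] at e0 e1 e2
    rw [show x + 1 + 1 = x + 2 by ring] at e1
    rw [show x + 2 + 1 = x + 3 by ring] at e2
    have hmono : (∫ s in x..(x+1), ((s + 0) ^ (p-1) + (s + 2) ^ (p-1))) ≤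
        ∫ s in x..(x+1), 2 * (s + 1) ^ (p-1) := by
      apply integral_mono_on (by linarith)
      · exact (ii_shift (by linarith) 0 x (x+1)).add (ii_shift (by linarith) 2 x (x+1))
      · exact ((ii_shift (by linarith) 1 x (x+1)).const_mul 2)
      · intro s hs
        obtain ⟨hs1, hs2⟩ := hs
        have hsnn : 0 ≤ s := le_trans hx hs1
        have h := second_diff_nonpos (q := p - 1) hq0.le (by linarith) hsnn
        simp only [add_zero]
        linarith
    rw [intervalIntegral.integral_const_mul, integral_add (ii_shift (by linarith) 0 x (x+1))
      (ii_shift (by linarith) 2 x (x+1))] at hmono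
    simp only [add_zero] at hmono
    nlinarith [mul_le_mul_of_nonneg_left hmono (show (0:ℝ) ≤ p by linarith), e0, e1, e2]

/-- fourth difference of `x ^ p` is nonnegative for `1 ≤ p ≤ 2`, `x ≥ 0`. -/
lemma fourth_diff_nonneg {p x : ℝ} (hp1 : 1 ≤ p) (hp2 : p ≤ 2) (hx : 0 ≤ x) :
    0 ≤ (x+4) ^ p - 4 * (x+3) ^ p + 6 * (x+2) ^ p - 4 * (x+1) ^ p + x ^ p := by
  rcases eq_or_lt_of_le hp1 with h1 | hp1'
  · rw [← h1]
    simp only [Real.rpow_one]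
    linarith
  · have hq0 : (0:ℝ) < p - 1 := by linarith
    have e0 := diff_eq_integral (show (0:ℝ) < p by linarith) x 0
    have e1 := diff_eq_integral (show (0:ℝ) < p by linarith) x 1
    have e2 := diff_eq_integral (show (0:ℝ) < p by linarith) x 2
    have e3 := diff_eq_integral (show (0:ℝ) < p by linarith) x 3
    simp only [add_zero] at e0 e1 e2 e3
    rw [show x + 1 + 1 = x + 2 by ring] at e1
    rw [show x + 2 + 1 = x + 3 by ring] at e2
    rw [show x + 3 + 1 = x + 4 by ring] at e3
    have hmono : (∫ s in x..(x+1), ((s + 0) ^ (p-1) + 3 * (s + 2) ^ (p-1))) ≤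
        ∫ s in x..(x+1), ((s + 3) ^ (p-1) + 3 * (s + 1) ^ (p-1)) := by
      apply integral_mono_on (by linarith)
      · exact (ii_shift (by linarith) 0 x (x+1)).add
          ((ii_shift (by linarith) 2 x (x+1)).const_mul 3)
      · exact (ii_shift (by linarith) 3 x (x+1)).add
          ((ii_shift (by linarith) 1 x (x+1)).const_mul 3)
      · intro s hs
        obtain ⟨hs1, hs2⟩ := hs
        have hsnn : 0 ≤ s := le_trans hx hs1
        have h := third_diff_nonneg (q := p - 1) hq0 (by linarith) hsnn
        simp only [add_zero]
        linarith
    rw [integral_add (ii_shift (by linarith) 0 x (x+1))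
        ((ii_shift (by linarith) 2 x (x+1)).const_mul 3),
      integral_add (ii_shift (by linarith) 3 x (x+1))
        ((ii_shift (by linarith) 1 x (x+1)).const_mul 3),
      intervalIntegral.integral_const_mul, intervalIntegral.integral_const_mul] at hmono
    simp only [add_zero] at hmono
    nlinarith [mul_le_mul_of_nonneg_left hmono (show (0:ℝ) ≤ p by linarith), e0, e1, e2, e3]


variable {γ : ℝ} {α : ℝ} {N : ℕ}

lemma lCoef_pos (h0 : 0 < γ) (h1 : γ < 1) (s : ℕ) : 0 < lCoef γ s := by
  have := Real.rpow_lt_rpow (Nat.cast_nonneg s)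
    (show (s:ℝ) < (s:ℝ) + 1 by linarith) (show 0 < 1 - γ by linarith)
  unfold lCoef; linarith

lemma lCoef_zero (h1 : γ < 1) : lCoef γ 0 = 1 := by
  unfold lCoef
  norm_num
  exact Real.zero_rpow (by linarith)

lemma lCoef_succ_le (h0 : 0 < γ) (h1 : γ < 1) (s : ℕ) : lCoef γ (s + 1) ≤ lCoef γ s := by
  have h := second_diff_nonpos (q := 1 - γ) (t := (s:ℝ)) (by linarith) (by linarith)
    (Nat.cast_nonneg s)
  unfold lCoef
  push_cast
  rw [show (s:ℝ) + 1 + 1 = (s:ℝ) + 2 by ring]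
  linarith

lemma lCoef_antitone (h0 : 0 < γ) (h1 : γ < 1) : Antitone (lCoef γ) :=
  antitone_nat_of_succ_le (lCoef_succ_le h0 h1)

lemma lCoef_le_one (h0 : 0 < γ) (h1 : γ < 1) (s : ℕ) : lCoef γ s ≤ 1 := by
  have := lCoef_antitone h0 h1 (Nat.zero_le s)
  rw [lCoef_zero h1] at this
  exact this

lemma lCoef_lower (h0 : 0 < γ) (h1 : γ < 1) {k : ℕ} (hk : 1 ≤ k) :
    (1 - γ) * (k:ℝ) ^ (-γ) ≤ lCoef γ (k - 1) := by
  rcases Nat.eq_or_lt_of_le hk with h | h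
  · rw [← h]
    simp only [Nat.sub_self, lCoef_zero h1, Nat.cast_one, Real.one_rpow]
    linarith
  · -- k ≥ 2
    have hk2 : (2:ℕ) ≤ k := h
    have hK1 : (1:ℝ) ≤ (k:ℝ) - 1 := by
      have : (2:ℝ) ≤ (k:ℝ) := by exact_mod_cast hk2
      linarith
    have hcast : ((k - 1 : ℕ) : ℝ) = (k:ℝ) - 1 := by
      push_cast [Nat.cast_sub hk]; ring
    have hd := diff_eq_integral (show (0:ℝ) < 1 - γ by linarith) ((k:ℝ) - 1) 0
    simp only [add_zero] at hd
    rw [show (k:ℝ) - 1 + 1 = (k:ℝ) by ring, show 1 - γ - 1 = -γ by ring] at hd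
    have hmono : (∫ s in ((k:ℝ)-1)..(k:ℝ), ((k:ℝ)) ^ (-γ)) ≤
        ∫ s in ((k:ℝ)-1)..(k:ℝ), s ^ (-γ) := by
      apply integral_mono_on (by linarith)
      · exact intervalIntegrable_const
      · exact intervalIntegrable_rpow' (by linarith)
      · intro s hs
        obtain ⟨hs1, hs2⟩ := hs
        have hspos : 0 < s := lt_of_lt_of_le (by linarith) hs1
        exact Real.rpow_le_rpow_of_nonpos hspos (by linarith) (by linarith)
    rw [intervalIntegral.integral_const] at hmono
    rw [show (k:ℝ) - ((k:ℝ) - 1) = 1 by ring, one_smul] at hmono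
    unfold lCoef
    rw [hcast, show ((k:ℝ) - 1) + 1 = (k:ℝ) by ring]
    calc (1 - γ) * (k:ℝ) ^ (-γ)
        ≤ (1 - γ) * ∫ s in ((k:ℝ)-1)..(k:ℝ), s ^ (-γ) :=
          mul_le_mul_of_nonneg_left hmono (by linarith)
      _ = (k:ℝ) ^ (1-γ) - ((k:ℝ) - 1) ^ (1-γ) := by rw [← hd]



/-- diagonal entry -/
lemma gCoef_diag (hα2 : α ≤ 2) {i : ℕ} (hi : 1 ≤ i) (hiN : i + 1 ≤ N) :
    gCoef α N i i = 2 * (2:ℝ) ^ (3 - α) - 8 := by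
  have hp : (3:ℝ) - α ≠ 0 := by intro h; nlinarith
  have hiN' : i ≠ N := by omega
  have h1 : i ≠ i + 1 := by omega
  have h2 : i ≠ i - 1 := by omega
  have hc : ((i - 1 : ℕ) : ℝ) = (i:ℝ) - 1 := by
    push_cast [Nat.cast_sub hi]; ring
  simp only [gCoef, pCoef, qCoef, lt_irrefl, if_false, if_pos rfl, if_neg h1,
    if_neg (by omega : ¬ i + 1 < i), if_neg (by omega : ¬ i + 1 = i)]
  simp only [aCoef, bCoef, if_pos rfl, if_neg h1, if_neg (by omega : i ≠ 0),
    if_neg hiN', if_neg h2]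
  rw [hc]
  push_cast
  ring_nf
  norm_num [Real.one_rpow, Real.zero_rpow hp]
  ring

/-- super-diagonal entry -/
lemma gCoef_super (hα2 : α ≤ 2) {i : ℕ} (hi : 1 ≤ i) (hiN : i + 2 ≤ N) :
    gCoef α N i (i+1) = 7 + (3:ℝ) ^ (3-α) - 4 * (2:ℝ) ^ (3-α) := by
  have hp : (3:ℝ) - α ≠ 0 := by intro h; nlinarith
  have hc : ((i - 1 : ℕ) : ℝ) = (i:ℝ) - 1 := by push_cast [Nat.cast_sub hi]; ring
  simp only [gCoef, pCoef, qCoef, if_neg (by omega : ¬ i + 1 < i),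
    if_neg (by omega : ¬ i + 1 = i), if_pos rfl,
    if_neg (by omega : ¬ i + 1 + 1 < i), if_neg (by omega : ¬ i + 1 + 1 = i)]
  simp only [aCoef, bCoef, if_pos rfl, if_neg (by omega : i + 1 ≠ i - 1),
    if_neg (by omega : i + 1 ≠ N), if_neg (by omega : i + 1 ≠ i)]
  rw [hc]
  push_cast
  ring_nf
  norm_num [Real.zero_rpow hp]
  ring

/-- sub-diagonal entry -/
lemma gCoef_sub (hα2 : α ≤ 2) {i : ℕ} (hi : 2 ≤ i) (hiN : i + 1 ≤ N) :
    gCoef α N i (i-1) = 7 + (3:ℝ) ^ (3-α) - 4 * (2:ℝ) ^ (3-α) := by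
  have hp : (3:ℝ) - α ≠ 0 := by intro h; nlinarith
  have hc : ((i - 1 : ℕ) : ℝ) = (i:ℝ) - 1 := by push_cast [Nat.cast_sub (by omega : 1 ≤ i)]; ring
  simp only [gCoef, pCoef, qCoef, if_pos (by omega : i - 1 < i),
    if_neg (by omega : ¬ i - 1 + 1 < i), if_pos (by omega : i - 1 + 1 = i)]
  simp only [aCoef, bCoef, if_pos rfl, if_neg (by omega : i - 1 ≠ i),
    if_neg (by omega : i - 1 ≠ 0), if_neg (by omega : i - 1 ≠ i + 1)]
  rw [hc]
  push_cast
  ring_nf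
  norm_num [Real.zero_rpow hp]
  ring

/-- far left entries -/
lemma gCoef_farleft (hα2 : α ≤ 2) {i m : ℕ} (hm : 1 ≤ m) (hmi : m + 2 ≤ i) :
    gCoef α N i m = ((i:ℝ)-(m:ℝ)+2) ^ (3-α) - 4*((i:ℝ)-(m:ℝ)+1) ^ (3-α)
      + 6*((i:ℝ)-(m:ℝ)) ^ (3-α) - 4*((i:ℝ)-(m:ℝ)-1) ^ (3-α) + ((i:ℝ)-(m:ℝ)-2) ^ (3-α) := by
  have hc : ((i - 1 : ℕ) : ℝ) = (i:ℝ) - 1 := by push_cast [Nat.cast_sub (by omega : 1 ≤ i)]; ring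
  simp only [gCoef, pCoef, qCoef, if_pos (by omega : m < i), if_pos (by omega : m + 1 < i)]
  simp only [aCoef, if_neg (by omega : m ≠ i - 1), if_neg (by omega : m ≠ i),
    if_neg (by omega : m ≠ i + 1), if_neg (by omega : m ≠ 0)]
  rw [hc]
  push_cast
  ring

/-- far right entries -/
lemma gCoef_farright (hα2 : α ≤ 2) {i m : ℕ} (hi : 1 ≤ i) (him : i + 2 ≤ m) (hmN : m + 1 ≤ N) :
    gCoef α N i m = ((m:ℝ)-(i:ℝ)+2) ^ (3-α) - 4*((m:ℝ)-(i:ℝ)+1) ^ (3-α)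
      + 6*((m:ℝ)-(i:ℝ)) ^ (3-α) - 4*((m:ℝ)-(i:ℝ)-1) ^ (3-α) + ((m:ℝ)-(i:ℝ)-2) ^ (3-α) := by
  have hc : ((i - 1 : ℕ) : ℝ) = (i:ℝ) - 1 := by push_cast [Nat.cast_sub hi]; ring
  simp only [gCoef, pCoef, qCoef, if_neg (by omega : ¬ m < i), if_neg (by omega : ¬ m = i),
    if_neg (by omega : ¬ m = i + 1), if_neg (by omega : ¬ m + 1 < i),
    if_neg (by omega : ¬ m + 1 = i)]
  simp only [bCoef, if_neg (by omega : m ≠ i - 1), if_neg (by omega : m ≠ i),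
    if_neg (by omega : m ≠ i + 1), if_neg (by omega : m ≠ N)]
  rw [hc]
  push_cast
  ring

/-- the Riesz weights as a function of the distance to the diagonal. -/
noncomputable def Hfun (ν : ℝ) (t : ℕ) : ℝ :=
  if t = 1 then 7 + (3:ℝ) ^ (3-ν) - 4 * (2:ℝ) ^ (3-ν)
  else ((t:ℝ)+2) ^ (3-ν) - 4*((t:ℝ)+1) ^ (3-ν) + 6*(t:ℝ) ^ (3-ν)
    - 4*((t:ℝ)-1) ^ (3-ν) + ((t:ℝ)-2) ^ (3-ν)

/-- second difference of the L1 weights. -/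
noncomputable def D2e (ν : ℝ) (s : ℕ) : ℝ :=
  ((s:ℝ)+1) ^ (3-ν) - 2*(s:ℝ) ^ (3-ν) + ((s:ℝ)-1) ^ (3-ν)

lemma fourth_expr_nonneg {p d : ℝ} (hp1 : 1 ≤ p) (hp2 : p ≤ 2) (hd : 2 ≤ d) :
    0 ≤ (d+2) ^ p - 4*(d+1) ^ p + 6*d ^ p - 4*(d-1) ^ p + (d-2) ^ p := by
  have h := fourth_diff_nonneg hp1 hp2 (x := d - 2) (by linarith)
  rw [show d-2+4 = d+2 by ring, show d-2+3 = d+1 by ring, show d-2+2 = d by ring,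
    show d-2+1 = d-1 by ring] at h
  exact h

lemma Hfun_nonneg (hα1 : 1 < α) (hα2 : α ≤ 2) {t : ℕ} (ht : 1 ≤ t) : 0 ≤ Hfun α t := by
  have hp1 : (1:ℝ) ≤ 3 - α := by linarith
  have hp2 : (3:ℝ) - α ≤ 2 := by linarith
  rcases eq_or_lt_of_le ht with h1 | h2
  · rw [Hfun, if_pos h1.symm]
    exact seven_ineq hp1 hp2
  · rw [Hfun, if_neg (by omega : t ≠ 1)]
    exact fourth_expr_nonneg hp1 hp2 (by exact_mod_cast h2)

lemma Hsum_eq (hα2 : α ≤ 2) {M : ℕ} (hM : 1 ≤ M) :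
    ∑ t ∈ Icc 1 M, Hfun α t = 2 - D2e α 1 + (D2e α (M+1) - D2e α M) := by
  have hp : (3:ℝ) - α ≠ 0 := by intro h; nlinarith
  induction M, hM using Nat.le_induction with
  | base =>
    rw [Finset.Icc_self, Finset.sum_singleton, Hfun, if_pos rfl]
    simp only [D2e]
    push_cast
    ring_nf
    norm_num [Real.zero_rpow hp]
    ring
  | succ M hM ih =>
    rw [Finset.sum_Icc_succ_top (by omega : 1 ≤ M + 1), ih]
    have hH : Hfun α (M+1) = D2e α M - 2 * D2e α (M+1) + D2e α (M+2) := by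
      rw [Hfun, if_neg (by omega : M + 1 ≠ 1)]
      simp only [D2e]
      push_cast
      ring_nf
    rw [hH]
    ring

lemma Hsum_le (hα1 : 1 < α) (hα2 : α ≤ 2) (M : ℕ) :
    ∑ t ∈ Icc 1 M, Hfun α t ≤ 4 - (2:ℝ) ^ (3-α) := by
  have hp : (3:ℝ) - α ≠ 0 := by intro h; nlinarith
  have hp1 : (1:ℝ) ≤ 3 - α := by linarith
  have hp2 : (3:ℝ) - α ≤ 2 := by linarith
  have h2p4 : (2:ℝ) ^ (3-α) ≤ 4 := by
    calc (2:ℝ) ^ (3-α) ≤ (2:ℝ) ^ (2:ℝ) := Real.rpow_le_rpow_of_exponent_le (by norm_num) hp2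
      _ = 4 := by rw [show (2:ℝ) = ((2:ℕ):ℝ) by norm_num, Real.rpow_natCast]; norm_num
  rcases Nat.eq_zero_or_pos M with h0 | hM
  · subst h0
    simp
    linarith
  · rw [Hsum_eq hα2 hM]
    have hD1 : D2e α 1 = (2:ℝ) ^ (3-α) - 2 := by
      simp only [D2e]
      norm_num [Real.zero_rpow hp]
    have hdec : D2e α (M+1) - D2e α M ≤ 0 := by
      have h := third_diff_p_nonpos hp1 hp2 (x := (M:ℝ) - 1)
        (by simp; exact_mod_cast hM)
      rw [show (M:ℝ)-1+3 = (M:ℝ)+2 by ring, show (M:ℝ)-1+2 = (M:ℝ)+1 by ring,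
        show (M:ℝ)-1+1 = (M:ℝ) by ring] at h
      simp only [D2e]
      push_cast
      ring_nf
      ring_nf at h
      linarith
    rw [hD1]
    linarith

/-- interior entries at distance ≥ 1 to the left of the diagonal -/
lemma gCoef_left_eq (hα2 : α ≤ 2) {i m : ℕ} (hm : 1 ≤ m) (hmi : m + 1 ≤ i) (hiN : i + 1 ≤ N) :
    gCoef α N i m = Hfun α (i - m) := by
  rcases eq_or_lt_of_le hmi with h1 | h2
  · have hmi' : m = i - 1 := by omega
    rw [hmi', gCoef_sub hα2 (by omega) (by omega), Hfun, if_pos (by omega)]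
  · have hc : ((i - m : ℕ) : ℝ) = (i:ℝ) - (m:ℝ) := by
      push_cast [Nat.cast_sub (by omega : m ≤ i)]; ring
    rw [gCoef_farleft hα2 hm (by omega), Hfun, if_neg (by omega), hc]

/-- interior entries at distance ≥ 1 to the right of the diagonal -/
lemma gCoef_right_eq (hα2 : α ≤ 2) {i m : ℕ} (hi : 1 ≤ i) (him : i + 1 ≤ m) (hmN : m + 1 ≤ N) :
    gCoef α N i m = Hfun α (m - i) := by
  rcases eq_or_lt_of_le him with h1 | h2
  · have hmi' : m = i + 1 := by omega
    rw [hmi', gCoef_super hα2 hi (by omega), Hfun, if_pos (by omega)]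
  · have hc : ((m - i : ℕ) : ℝ) = (m:ℝ) - (i:ℝ) := by
      push_cast [Nat.cast_sub (by omega : i ≤ m)]; ring
    rw [gCoef_farright hα2 hi (by omega) hmN, Hfun, if_neg (by omega), hc]

/-- interior off-diagonal entries are nonnegative -/
lemma gCoef_offdiag_nonneg (hα1 : 1 < α) (hα2 : α ≤ 2) {i m : ℕ} (hi : 1 ≤ i)
    (hiN : i + 1 ≤ N) (hm : 1 ≤ m) (hmN : m + 1 ≤ N) (hne : m ≠ i) :
    0 ≤ gCoef α N i m := by
  rcases lt_or_gt_of_ne hne with h | h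
  · rw [gCoef_left_eq hα2 hm (by omega) hiN]
    exact Hfun_nonneg hα1 hα2 (by omega)
  · rw [gCoef_right_eq hα2 hi (by omega) hmN]
    exact Hfun_nonneg hα1 hα2 (by omega)

/-- the key diagonal-dominance bound for interior rows -/
lemma sum_offdiag_le (hα1 : 1 < α) (hα2 : α ≤ 2) {i : ℕ} (hi : 1 ≤ i) (hiN : i + 1 ≤ N) :
    ∑ m ∈ (Icc 1 (N-1)).erase i, gCoef α N i m ≤ 8 - 2 * (2:ℝ) ^ (3-α) := by
  have hsplit : (Icc 1 (N-1)).erase i = Icc 1 (i-1) ∪ Icc (i+1) (N-1) := by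
    ext x
    simp only [Finset.mem_erase, Finset.mem_Icc, Finset.mem_union]
    omega
  have hdisj : Disjoint (Icc 1 (i-1)) (Icc (i+1) (N-1)) := by
    rw [Finset.disjoint_left]
    intro x hx hx'
    simp only [Finset.mem_Icc] at hx hx'
    omega
  rw [hsplit, Finset.sum_union hdisj]
  have hleft : ∑ m ∈ Icc 1 (i-1), gCoef α N i m = ∑ t ∈ Icc 1 (i-1), Hfun α t := by
    apply Finset.sum_nbij' (fun m => i - m) (fun t => i - t)
    · intro a ha; simp only [Finset.mem_Icc] at ha ⊢; omega
    · intro a ha; simp only [Finset.mem_Icc] at ha ⊢; omega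
    · intro a ha; simp only [Finset.mem_Icc] at ha; omega
    · intro a ha; simp only [Finset.mem_Icc] at ha; omega
    · intro a ha; simp only [Finset.mem_Icc] at ha
      exact gCoef_left_eq hα2 (by omega) (by omega) hiN
  have hright : ∑ m ∈ Icc (i+1) (N-1), gCoef α N i m = ∑ t ∈ Icc 1 (N-1-i), Hfun α t := by
    apply Finset.sum_nbij' (fun m => m - i) (fun t => t + i)
    · intro a ha; simp only [Finset.mem_Icc] at ha ⊢; omega
    · intro a ha; simp only [Finset.mem_Icc] at ha ⊢; omega
    · intro a ha; simp only [Finset.mem_Icc] at ha; omega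
    · intro a ha; simp only [Finset.mem_Icc] at ha; omega
    · intro a ha; simp only [Finset.mem_Icc] at ha
      exact gCoef_right_eq hα2 hi (by omega) (by omega)
  rw [hleft, hright]
  have h1 := Hsum_le hα1 hα2 (i-1)
  have h2 := Hsum_le hα1 hα2 (N-1-i)
  linarith

end ExplAux

set_option maxHeartbeats 1000000 in
/-- Theorem 4.2 (case `0 < γ < 1`): conditional convergence of the one-dimensional
explicit scheme under the stability condition
`4(-κ_α) C_max Γ(2-γ)(1-2^(1-α)) τ^γ ≤ Γ(4-α)(1-2^(-γ)) Δx^α`. -/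
theorem explicit_1d_convergence (γ α : ℝ) (hγ : γ ∈ Set.Ioo (0:ℝ) 1)
    (hα : α ∈ Set.Ioc (1:ℝ) 2)
    (N Nt : ℕ) (hN : 2 ≤ N) (hNt : 1 ≤ Nt)
    (τ Δx : ℝ) (hτ : 0 < τ) (hΔx : 0 < Δx)
    (c : ℕ → ℕ → ℝ) (Cmax : ℝ)
    (hc : ∀ i k : ℕ, 1 ≤ i → i ≤ N - 1 → k ≤ Nt - 1 → 0 ≤ c i k ∧ c i k ≤ Cmax)
    (hstab : 4 * (-kappa α) * Cmax * Real.Gamma (2 - γ) * (1 - (2:ℝ) ^ (1 - α)) * τ ^ γ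
      ≤ Real.Gamma (4 - α) * (1 - (2:ℝ) ^ (-γ)) * Δx ^ α)
    (σ : ℕ → ℕ → ℝ)
    (hσ : ∀ i k : ℕ, 1 ≤ i → i ≤ N - 1 → k ≤ Nt - 1 →
      σ i k = -(Real.Gamma (2 - γ) * τ ^ γ * kappa α * c i k) / (Real.Gamma (4 - α) * Δx ^ α))
    (R : ℕ → ℕ → ℝ) (Rmax : ℝ)
    (hRmax : IsGreatest
      {x : ℝ | ∃ i k : ℕ, 1 ≤ i ∧ i ≤ N - 1 ∧ 1 ≤ k ∧ k ≤ Nt ∧ x = |R k i|} Rmax)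
    (ε : ℕ → ℕ → ℝ)
    (hinit : ∀ i : ℕ, i ≤ N → ε 0 i = 0)
    (hbc : ∀ k : ℕ, 1 ≤ k → k ≤ Nt → ε k 0 = 0 ∧ ε k N = 0)
    (hscheme0 : ∀ i : ℕ, 1 ≤ i → i ≤ N - 1 → ε 1 i = R 1 i)
    (hscheme : ∀ i k : ℕ, 1 ≤ i → i ≤ N - 1 → 1 ≤ k → k + 1 ≤ Nt →
      ε (k + 1) i = (1 - lCoef γ 1 + σ i k * gCoef α N i i) * ε k i
        + (∑ s ∈ Finset.Icc 1 (k - 1), (lCoef γ s - lCoef γ (s + 1)) * ε (k - s) i)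
        + σ i k * (∑ m ∈ (Finset.range (N + 1)).erase i, gCoef α N i m * ε k m)
        + R (k + 1) i) :
    (∀ k : ℕ, 1 ≤ k → k ≤ Nt →
      maxAbs N (ε k) ≤ Rmax / lCoef γ (k - 1) ∧
      Rmax / lCoef γ (k - 1) ≤ (k : ℝ) ^ γ / (1 - γ) * Rmax) ∧
    (∀ T C : ℝ, 0 < T → (Nt : ℝ) * τ ≤ T → 0 < C →
      (∀ i k : ℕ, 1 ≤ i → i ≤ N - 1 → 1 ≤ k → k ≤ Nt →
        |R k i| ≤ C * τ ^ γ * (τ ^ (2 - γ) + Δx ^ 2)) →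
      ∀ k : ℕ, k ≤ Nt →
        maxAbs N (ε k) ≤ C * T ^ γ / (1 - γ) * (τ ^ (2 - γ) + Δx ^ 2)) := by
  obtain ⟨hγ0, hγ1⟩ := hγ
  obtain ⟨hα1, hα2⟩ := hα
  -- maxAbs facts
  have maxAbs_le : ∀ (v : ℕ → ℝ) (b : ℝ), (∀ i, i ≤ N → |v i| ≤ b) → maxAbs N v ≤ b := by
    intro v b h
    unfold maxAbs
    apply Finset.sup'_le
    intro i hi
    exact h i (by simpa [Nat.lt_succ_iff] using Finset.mem_range.mp hi)
  have le_maxAbs : ∀ (v : ℕ → ℝ) (i : ℕ), i ≤ N → |v i| ≤ maxAbs N v := by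
    intro v i hi
    unfold maxAbs
    exact Finset.le_sup' (fun j => |v j|) (Finset.mem_range.mpr (by omega))
  have maxAbs_nonneg : ∀ v : ℕ → ℝ, 0 ≤ maxAbs N v := fun v =>
    le_trans (abs_nonneg (v 0)) (le_maxAbs v 0 (by omega))
  -- basic positivity facts
  have hG2 : 0 < Real.Gamma (2 - γ) := Real.Gamma_pos_of_pos (by linarith)
  have hG4 : 0 < Real.Gamma (4 - α) := Real.Gamma_pos_of_pos (by linarith)
  have hτγ : 0 < τ ^ γ := Real.rpow_pos_of_pos hτ γ
  have hΔα : 0 < Δx ^ α := Real.rpow_pos_of_pos hΔx α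
  have hκ : kappa α < 0 := by
    unfold kappa
    have hπ := Real.pi_pos
    have hcos : Real.cos (α * Real.pi / 2) < 0 := by
      apply Real.cos_neg_of_pi_div_two_lt_of_lt
      · nlinarith
      · nlinarith
    apply div_neg_of_pos_of_neg one_pos
    linarith
  have hRmax0 : 0 ≤ Rmax := by
    obtain ⟨i0, k0, _, _, _, _, heq⟩ := hRmax.1
    rw [heq]; exact abs_nonneg _
  have hRub : ∀ i k : ℕ, 1 ≤ i → i ≤ N - 1 → 1 ≤ k → k ≤ Nt → |R k i| ≤ Rmax :=
    fun i k h1 h2 h3 h4 => hRmax.2 ⟨i, k, h1, h2, h3, h4, rfl⟩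
  have hL1 : ∀ s, 0 < lCoef γ s := lCoef_pos hγ0 hγ1
  have hLanti : Antitone (lCoef γ) := lCoef_antitone hγ0 hγ1
  have hLone : ∀ s, lCoef γ s ≤ 1 := lCoef_le_one hγ0 hγ1
  -- σ facts
  have hσfacts : ∀ i k : ℕ, 1 ≤ i → i + 1 ≤ N → k + 1 ≤ Nt →
      0 ≤ σ i k ∧ σ i k * (8 - 2 * (2:ℝ) ^ (3 - α)) ≤ 1 - lCoef γ 1 := by
    intro i k hi1 hiN hk
    obtain ⟨hc0, hcC⟩ := hc i k hi1 (by omega) (by omega)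
    have hσeq := hσ i k hi1 (by omega) (by omega)
    have hD : 0 < Real.Gamma (4 - α) * Δx ^ α := mul_pos hG4 hΔα
    constructor
    · rw [hσeq]
      apply div_nonneg _ hD.le
      rw [show -(Real.Gamma (2 - γ) * τ ^ γ * kappa α * c i k)
          = Real.Gamma (2 - γ) * τ ^ γ * c i k * (-kappa α) by ring]
      exact mul_nonneg (mul_nonneg (by positivity) hc0) (by linarith)
    · have h2a1 : (2:ℝ) ^ (1 - α) ≤ 1 :=
        Real.rpow_le_one_of_one_le_of_nonpos (by norm_num) (by linarith)
      have e1 : (2:ℝ) ^ (3 - α) = 4 * (2:ℝ) ^ (1 - α) := by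
        rw [show (3:ℝ) - α = 2 + (1 - α) by ring, Real.rpow_add (by norm_num : (0:ℝ) < 2),
          show (2:ℝ) ^ (2:ℝ) = 4 by
            rw [show (2:ℝ) = ((2:ℕ):ℝ) by norm_num, Real.rpow_natCast]; norm_num]
      have e2 : lCoef γ 1 = 2 * (2:ℝ) ^ (-γ) - 1 := by
        unfold lCoef
        push_cast
        rw [show ((1:ℝ) + 1) = 2 by ring, Real.one_rpow,
          show (1:ℝ) - γ = 1 + -γ by ring, Real.rpow_add (by norm_num : (0:ℝ) < 2),
          Real.rpow_one]
      have hcfac : 0 ≤ 4 * (-kappa α) * Real.Gamma (2 - γ) * (1 - (2:ℝ) ^ (1 - α)) * τ ^ γ :=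
        mul_nonneg (mul_nonneg (mul_nonneg
          (mul_nonneg (by norm_num) (by linarith)) hG2.le) (by linarith)) hτγ.le
      have hkey := mul_le_mul_of_nonneg_right hcC hcfac
      rw [hσeq, e1, e2, div_mul_eq_mul_div, div_le_iff₀ hD]
      nlinarith [hkey, hstab]
  -- telescoping of the L1 weights
  have htel : ∀ n : ℕ, 1 ≤ n →
      ∑ s ∈ Finset.Icc 1 (n - 1), (lCoef γ s - lCoef γ (s + 1)) = lCoef γ 1 - lCoef γ n := by
    intro n hn
    induction n, hn using Nat.le_induction with
    | base => simp
    | succ n hn ih =>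
      have hIcc : Finset.Icc 1 (n + 1 - 1) = Finset.Icc 1 ((n - 1) + 1) := by
        congr 1
        omega
      rw [hIcc, Finset.sum_Icc_succ_top (by omega), ih, Nat.sub_add_cancel hn]
      ring
  -- the main induction
  have main : ∀ k, 1 ≤ k → k ≤ Nt → maxAbs N (ε k) ≤ Rmax / lCoef γ (k - 1) := by
    intro k
    induction k using Nat.strong_induction_on with
    | _ k ih =>
      intro hk1 hkNt
      rcases Nat.lt_or_ge k 2 with hk2 | hk2
      · -- base case k = 1
        have hk1' : k = 1 := by omega
        subst hk1'
        rw [show (1:ℕ) - 1 = 0 from rfl, lCoef_zero hγ1, div_one]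
        apply maxAbs_le
        intro i hiN
        by_cases h0 : i = 0
        · subst h0; rw [(hbc 1 le_rfl hNt).1]; simpa using hRmax0
        by_cases hN' : i = N
        · subst hN'; rw [(hbc 1 le_rfl hNt).2]; simpa using hRmax0
        · have hi1 : 1 ≤ i := by omega
          have hi2 : i ≤ N - 1 := by omega
          rw [hscheme0 i hi1 hi2]
          exact hRub i 1 hi1 hi2 le_rfl hNt
      · -- inductive step
        obtain ⟨k', rfl⟩ : ∃ k', k = k' + 1 := ⟨k - 1, by omega⟩
        have hk'1 : 1 ≤ k' := by omega
        have hk'Nt : k' + 1 ≤ Nt := hkNt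
        rw [show k' + 1 - 1 = k' from rfl]
        set L := lCoef γ with hLdef
        set X := Rmax / L (k' - 1) with hXdef
        have ha := hL1 (k' - 1)
        have hb := hL1 k'
        have hba : L k' ≤ L (k' - 1) := hLanti (by omega)
        have hb1 : L k' ≤ 1 := hLone k'
        have hX0 : 0 ≤ X := div_nonneg hRmax0 ha.le
        have hEX : ∀ j, 1 ≤ j → j ≤ k' → maxAbs N (ε j) ≤ Rmax / L (j - 1) :=
          fun j hj1 hj2 => ih j (by omega) hj1 (by omega)
        have hEk' : maxAbs N (ε k') ≤ X := hEX k' hk'1 le_rfl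
        have hfinal : (1 - L k') * X + Rmax ≤ Rmax / L k' := by
          have e : (1 - L k') * X + Rmax
              = ((1 - L k') * Rmax + Rmax * L (k' - 1)) / L (k' - 1) := by
            rw [hXdef]; field_simp
          rw [e, div_le_div_iff₀ ha hb]
          nlinarith [mul_nonneg (mul_nonneg hRmax0 (sub_nonneg.2 hba)) (sub_nonneg.2 hb1)]
        apply maxAbs_le
        intro i hiN
        by_cases h0 : i = 0
        · subst h0; rw [(hbc (k' + 1) (by omega) hkNt).1, abs_zero]
          exact div_nonneg hRmax0 hb.le
        by_cases hN' : i = N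
        · subst hN'; rw [(hbc (k' + 1) (by omega) hkNt).2, abs_zero]
          exact div_nonneg hRmax0 hb.le
        have hi1 : 1 ≤ i := by omega
        have hiN1 : i + 1 ≤ N := by omega
        obtain ⟨hσ0, hσP⟩ := hσfacts i k' hi1 hiN1 hk'Nt
        have heq := hscheme i k' hi1 (by omega) hk'1 hk'Nt
        rw [gCoef_diag hα2 hi1 hiN1,
          show 1 - L 1 + σ i k' * (2 * (2:ℝ) ^ (3 - α) - 8)
            = (1 - L 1) - σ i k' * (8 - 2 * (2:ℝ) ^ (3 - α)) by ring] at heq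
        set P : ℝ := 8 - 2 * (2:ℝ) ^ (3 - α) with hPdef
        set S1 := ∑ s ∈ Finset.Icc 1 (k' - 1), (L s - L (s + 1)) * ε (k' - s) i with hS1
        set S2 := ∑ m ∈ (Finset.range (N + 1)).erase i, gCoef α N i m * ε k' m with hS2
        have hA0 : 0 ≤ (1 - L 1) - σ i k' * P := by linarith
        have b1 : |ε k' i| ≤ X := le_trans (le_maxAbs (ε k') i hiN) hEk'
        have bS1 : |S1| ≤ (L 1 - L k') * X := by
          calc |S1| ≤ ∑ s ∈ Finset.Icc 1 (k' - 1), |(L s - L (s + 1)) * ε (k' - s) i| :=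
                Finset.abs_sum_le_sum_abs _ _
            _ ≤ ∑ s ∈ Finset.Icc 1 (k' - 1), (L s - L (s + 1)) * X := by
                apply Finset.sum_le_sum
                intro s hs
                rw [Finset.mem_Icc] at hs
                have hls : 0 ≤ L s - L (s + 1) := sub_nonneg.2 (hLanti (Nat.le_succ s))
                rw [abs_mul, abs_of_nonneg hls]
                apply mul_le_mul_of_nonneg_left _ hls
                calc |ε (k' - s) i| ≤ maxAbs N (ε (k' - s)) := le_maxAbs _ i hiN
                  _ ≤ Rmax / L (k' - s - 1) := hEX _ (by omega) (by omega)
                  _ ≤ Rmax / L (k' - 1) := by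
                      have hd1 := hL1 (k' - s - 1)
                      have hd2 : L (k' - 1) ≤ L (k' - s - 1) := hLanti (by omega)
                      gcongr
            _ = (∑ s ∈ Finset.Icc 1 (k' - 1), (L s - L (s + 1))) * X :=
                (Finset.sum_mul _ _ _).symm
            _ = (L 1 - L k') * X := by rw [htel k' hk'1]
        have hS2eq : S2 = ∑ m ∈ (Finset.Icc 1 (N - 1)).erase i, gCoef α N i m * ε k' m := by
          rw [hS2]
          refine (Finset.sum_subset ?_ ?_).symm
          · intro x hx
            simp only [Finset.mem_erase, Finset.mem_Icc, Finset.mem_range] at hx ⊢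
            omega
          · intro x hx hnx
            simp only [Finset.mem_erase, Finset.mem_Icc, Finset.mem_range] at hx hnx
            have : x = 0 ∨ x = N := by omega
            rcases this with h | h
            · subst h; rw [(hbc k' hk'1 (by omega)).1, mul_zero]
            · subst h; rw [(hbc k' hk'1 (by omega)).2, mul_zero]
        have bS2 : |S2| ≤ P * X := by
          rw [hS2eq]
          calc |∑ m ∈ (Finset.Icc 1 (N - 1)).erase i, gCoef α N i m * ε k' m|
              ≤ ∑ m ∈ (Finset.Icc 1 (N - 1)).erase i, |gCoef α N i m * ε k' m| :=
                Finset.abs_sum_le_sum_abs _ _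
            _ ≤ ∑ m ∈ (Finset.Icc 1 (N - 1)).erase i, gCoef α N i m * X := by
                apply Finset.sum_le_sum
                intro m hm
                simp only [Finset.mem_erase, Finset.mem_Icc] at hm
                have hg0 : 0 ≤ gCoef α N i m :=
                  gCoef_offdiag_nonneg hα1 hα2 hi1 hiN1 hm.2.1 (by omega) hm.1
                rw [abs_mul, abs_of_nonneg hg0]
                apply mul_le_mul_of_nonneg_left _ hg0
                exact le_trans (le_maxAbs (ε k') m (by omega)) hEk'
            _ = (∑ m ∈ (Finset.Icc 1 (N - 1)).erase i, gCoef α N i m) * X :=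
                (Finset.sum_mul _ _ _).symm
            _ ≤ P * X :=
                mul_le_mul_of_nonneg_right (sum_offdiag_le hα1 hα2 hi1 hiN1) hX0
        have babs : |ε (k' + 1) i| ≤ |((1 - L 1) - σ i k' * P) * ε k' i| + |S1|
            + |σ i k' * S2| + |R (k' + 1) i| := by
          rw [heq]
          have t1 := abs_add_le (((1 - L 1) - σ i k' * P) * ε k' i + S1 + σ i k' * S2)
            (R (k' + 1) i)
          have t2 := abs_add_le (((1 - L 1) - σ i k' * P) * ε k' i + S1) (σ i k' * S2)
          have t3 := abs_add_le (((1 - L 1) - σ i k' * P) * ε k' i) S1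
          linarith
        have bR : |R (k' + 1) i| ≤ Rmax := hRub i (k' + 1) hi1 (by omega) (by omega) hkNt
        calc |ε (k' + 1) i|
            ≤ |((1 - L 1) - σ i k' * P) * ε k' i| + |S1| + |σ i k' * S2| + |R (k' + 1) i| :=
              babs
          _ ≤ ((1 - L 1) - σ i k' * P) * X + (L 1 - L k') * X + σ i k' * (P * X) + Rmax := by
              have u1 : |((1 - L 1) - σ i k' * P) * ε k' i| ≤ ((1 - L 1) - σ i k' * P) * X := by
                rw [abs_mul, abs_of_nonneg hA0]
                exact mul_le_mul_of_nonneg_left b1 hA0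
              have u3 : |σ i k' * S2| ≤ σ i k' * (P * X) := by
                rw [abs_mul, abs_of_nonneg hσ0]
                exact mul_le_mul_of_nonneg_left bS2 hσ0
              linarith
          _ = (1 - L k') * X + Rmax := by ring
          _ ≤ Rmax / L k' := hfinal
  -- the rate bound
  have hdiv : ∀ k : ℕ, 1 ≤ k → Rmax / lCoef γ (k - 1) ≤ (k:ℝ) ^ γ / (1 - γ) * Rmax := by
    intro k hk
    have hlow := lCoef_lower hγ0 hγ1 hk
    have hkpos : (0:ℝ) < (k:ℝ) := by exact_mod_cast hk
    have hkγ : 0 < (k:ℝ) ^ γ := Real.rpow_pos_of_pos hkpos γ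
    have hlow0 : 0 < (1 - γ) * (k:ℝ) ^ (-γ) :=
      mul_pos (by linarith) (Real.rpow_pos_of_pos hkpos _)
    calc Rmax / lCoef γ (k - 1) ≤ Rmax / ((1 - γ) * (k:ℝ) ^ (-γ)) := by
          gcongr
      _ = (k:ℝ) ^ γ / (1 - γ) * Rmax := by
          rw [Real.rpow_neg hkpos.le]
          field_simp
  refine ⟨fun k hk1 hk2 => ⟨main k hk1 hk2, hdiv k hk1⟩, ?_⟩
  intro T C hT hNtτ hC hRb k hkNt
  have hXs0 : 0 ≤ τ ^ (2 - γ) + Δx ^ 2 := by positivity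
  rcases Nat.eq_zero_or_pos k with rfl | hk1
  · apply maxAbs_le
    intro i hiN
    rw [hinit i hiN, abs_zero]
    exact mul_nonneg (div_nonneg (mul_nonneg hC.le (Real.rpow_nonneg hT.le γ))
      (by linarith)) hXs0
  · have h1 := main k hk1 hkNt
    have h2 := hdiv k hk1
    have hRm2 : Rmax ≤ C * τ ^ γ * (τ ^ (2 - γ) + Δx ^ 2) := by
      obtain ⟨i0, k0, hi01, hi0N, hk01, hk0Nt, heq⟩ := hRmax.1
      rw [heq]
      exact hRb i0 k0 hi01 hi0N hk01 hk0Nt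
    have h3 : (k:ℝ) ^ γ * τ ^ γ ≤ T ^ γ := by
      rw [← Real.mul_rpow (Nat.cast_nonneg k) hτ.le]
      apply Real.rpow_le_rpow (by positivity) _ hγ0.le
      calc (k:ℝ) * τ ≤ (Nt:ℝ) * τ :=
            mul_le_mul_of_nonneg_right (by exact_mod_cast hkNt) hτ.le
        _ ≤ T := hNtτ
    have hc1 : (0:ℝ) ≤ (k:ℝ) ^ γ / (1 - γ) :=
      div_nonneg (Real.rpow_nonneg (Nat.cast_nonneg k) γ) (by linarith)
    have hc2 : (0:ℝ) ≤ C / (1 - γ) * (τ ^ (2 - γ) + Δx ^ 2) :=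
      mul_nonneg (div_nonneg hC.le (by linarith)) hXs0
    calc maxAbs N (ε k) ≤ Rmax / lCoef γ (k - 1) := h1
      _ ≤ (k:ℝ) ^ γ / (1 - γ) * Rmax := h2
      _ ≤ (k:ℝ) ^ γ / (1 - γ) * (C * τ ^ γ * (τ ^ (2 - γ) + Δx ^ 2)) :=
          mul_le_mul_of_nonneg_left hRm2 hc1
      _ = (C / (1 - γ) * (τ ^ (2 - γ) + Δx ^ 2)) * ((k:ℝ) ^ γ * τ ^ γ) := by ring
      _ ≤ (C / (1 - γ) * (τ ^ (2 - γ) + Δx ^ 2)) * T ^ γ := mul_le_mul_of_nonneg_left h3 hc2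
      _ = C * T ^ γ / (1 - γ) * (τ ^ (2 - γ) + Δx ^ 2) := by ring
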